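/- If a positive rational x in lowest terms a/b satisfies x^x = α for some algebraic number α, then the minimal polynomial of α over ℤ has the form s X^d − r for positive integers r, s, d. -/

import Mathlib

open Polynomial

theorem aux_irred (α : ℝ) (hαpos : 0 < α) (d : ℕ) (hd : 0 < d) (c : ℚ)
    (hc : α ^ d = (c : ℝ))
    (hmin : ∀ n, 0 < n → n < d → ∀ q : ℚ, α ^ n ≠ (q : ℝ)) :
    Irreducible (X ^ d - C c : ℚ[X]) := by
  have hcpos : (0:ℝ) < (c : ℝ) := hc ▸ pow_pos hαpos d
  have hmonic : (X ^ d - C c : ℚ[X]).Monic := monic_X_pow_sub_C c hd.ne'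
  have hint : IsIntegral ℚ α := by
    refine ⟨X ^ d - C c, hmonic, ?_⟩
    simp [hc]
  set f := minpoly ℚ α with hf
  have hfmonic : f.Monic := minpoly.monic hint
  have hdvd : f ∣ X ^ d - C c := by
    apply minpoly.dvd
    simp [hc]
  have hne : (X ^ d - C c : ℚ[X]) ≠ 0 := hmonic.ne_zero
  have hdegXd : (X ^ d - C c : ℚ[X]).natDegree = d := natDegree_X_pow_sub_C
  set e := f.natDegree with he
  have hed : e ≤ d := hdegXd ▸ natDegree_le_of_dvd hdvd hne
  have hepos : 0 < e := minpoly.natDegree_pos hint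
  set F := f.map (algebraMap ℚ ℂ) with hF
  have hFsplits : Splits F := IsAlgClosed.splits F
  have hFmonic : F.Monic := hfmonic.map _
  have hcard : F.roots.card = e := by rw [← hFsplits.natDegree_eq_card_roots, hF, natDegree_map]
  have hrootabs : ∀ r ∈ F.roots, ‖r‖ = α := by
    intro r hr
    have hrroot : F.IsRoot r := isRoot_of_mem_roots hr
    have hFd : F ∣ (X ^ d - C ((c : ℝ) : ℂ)) := by
      have h2 := Polynomial.map_dvd (algebraMap ℚ ℂ) hdvd
      have h3 : (X ^ d - C c : ℚ[X]).map (algebraMap ℚ ℂ) = X ^ d - C ((c:ℝ):ℂ) := by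
        rw [Polynomial.map_sub, Polynomial.map_pow, map_X, map_C]
        norm_num
      rwa [h3] at h2
    have hroot2 : (X ^ d - C ((c:ℝ):ℂ)).IsRoot r := hrroot.dvd hFd
    have hrd : r ^ d = ((c:ℝ) : ℂ) := by
      simpa [IsRoot, sub_eq_zero] using hroot2
    have habs : ‖r‖ ^ d = α ^ d := by
      rw [← norm_pow, hrd, hc, Complex.norm_real, Real.norm_of_nonneg hcpos.le]
    exact (pow_left_inj₀ (by positivity) hαpos.le hd.ne').mp habs
  have hprodeq : F = (F.roots.map fun r => X - C r).prod :=
    hFsplits.eq_prod_roots_of_monic hFmonic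
  have heval : ‖F.eval 0‖ = α ^ e := by
    rw [hprodeq, eval_multiset_prod]
    change (normHom : ℂ →*₀ ℝ) _ = _
    rw [map_multiset_prod, Multiset.map_map, Multiset.map_map]
    have : Multiset.map ((⇑(normHom : ℂ →*₀ ℝ) ∘ eval 0) ∘ fun r => X - C r) F.roots =
        Multiset.map (fun _ => α) F.roots := by
      apply Multiset.map_congr rfl
      intro r hr
      simp [Function.comp, hrootabs r hr]
    rw [this, Multiset.map_const', Multiset.prod_replicate, hcard]
  have hFeval0 : F.eval 0 = ((f.coeff 0 : ℚ) : ℂ) := by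
    rw [hF, eval_map, eval₂_at_zero]
    rfl
  have hrate : α ^ e = ((|f.coeff 0| : ℚ) : ℝ) := by
    rw [← heval, hFeval0]
    rw [show ((f.coeff 0 : ℚ) : ℂ) = (((f.coeff 0 : ℚ) : ℝ) : ℂ) by push_cast; ring]
    rw [Complex.norm_real, Real.norm_eq_abs]
    push_cast
    ring
  have hede : e = d := by
    rcases lt_or_eq_of_le hed with hlt | heq
    · exact absurd hrate (hmin e hepos hlt _)
    · exact heq
  have hfeq : f = X ^ d - C c := by
    apply eq_of_dvd_of_natDegree_le_of_leadingCoeff hdvd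
    · rw [hdegXd, ← he, hede]
    · rw [hfmonic.leadingCoeff, hmonic.leadingCoeff]
  have := minpoly.irreducible hint
  rwa [← hf, hfeq] at this

open Polynomial in
theorem stmt_11 (a b : ℕ) (ha : 0 < a) (hb : 0 < b) (hab : Nat.Coprime a b)
    (α : ℝ) (hα : ((a : ℝ) / b) ^ ((a : ℝ) / b) = α) :
    ∃ r s d : ℕ, 0 < r ∧ 0 < s ∧ 0 < d ∧
      Polynomial.aeval α ((C (s : ℤ)) * X ^ d - C (r : ℤ)) = 0 ∧
      Irreducible ((C (s : ℤ)) * X ^ d - C (r : ℤ)) := by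
  have hb' : (0:ℝ) < b := by exact_mod_cast hb
  have hx : (0:ℝ) < (a:ℝ)/b := by positivity
  have hαpos : 0 < α := hα ▸ Real.rpow_pos_of_pos hx _
  -- α ^ b is rational
  have hαb : α ^ b = (((a:ℚ)^a / (b:ℚ)^a : ℚ) : ℝ) := by
    rw [← hα, ← Real.rpow_natCast (((a:ℝ)/b) ^ ((a:ℝ)/b)) b, ← Real.rpow_mul hx.le,
      div_mul_cancel₀ _ hb'.ne', Real.rpow_natCast, div_pow]
    push_cast
    ring
  have hPb : ∃ n : ℕ, 0 < n ∧ ∃ q : ℚ, α ^ n = (q : ℝ) := ⟨b, hb, _, hαb⟩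
  classical
  set d := Nat.find hPb with hdd
  obtain ⟨hd0, c, hc⟩ := Nat.find_spec hPb
  have hmin : ∀ n, 0 < n → n < d → ∀ q : ℚ, α ^ n ≠ (q : ℝ) := by
    intro n hn hnd q hq
    exact Nat.find_min hPb hnd ⟨hn, q, hq⟩
  have hirr : Irreducible (X ^ d - C c : ℚ[X]) := aux_irred α hαpos d hd0 c hc hmin
  have hcpos : 0 < c := by
    have : (0:ℝ) < (c:ℝ) := hc ▸ pow_pos hαpos d
    exact_mod_cast this
  have hnum : 0 < c.num := Rat.num_pos.mpr hcpos
  set R := c.num.toNat with hRR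
  set S := c.den with hSS
  have hR : (R : ℤ) = c.num := Int.toNat_of_nonneg hnum.le
  have hSne : (S:ℚ) ≠ 0 := by
    exact_mod_cast c.den_ne_zero
  have hSc : (S:ℚ) * c = (R:ℚ) := by
    have h1 : c = (c.num : ℚ) / (c.den : ℚ) := (Rat.num_div_den c).symm
    have h2 : ((R:ℤ):ℚ) = (c.num : ℚ) := by exact_mod_cast congrArg (Int.cast : ℤ → ℚ) hR
    push_cast at h2 ⊢
    rw [h1, h2]
    field_simp
    rfl
  refine ⟨R, S, d, by omega, c.pos, hd0, ?_, ?_⟩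
  · have : (Polynomial.aeval α) ((C (S:ℤ)) * X ^ d - C (R:ℤ)) = S * α ^ d - R := by
      simp
    rw [this, hc]
    have h2 : ((S:ℚ):ℝ) * ((c:ℚ):ℝ) = ((R:ℚ):ℝ) := by exact_mod_cast congrArg (Rat.cast : ℚ → ℝ) hSc
    push_cast at h2 ⊢
    linarith
  · have hcop : IsCoprime (R:ℤ) (S:ℤ) := by
      rw [Int.isCoprime_iff_gcd_eq_one]
      have : (R:ℤ).natAbs = c.num.natAbs := by rw [hR]
      rw [Int.gcd, this]
      simpa using c.reduced
    have hprim : IsPrimitive ((C (S:ℤ)) * X ^ d - C (R:ℤ)) := by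
      intro k hk
      rw [Polynomial.C_dvd_iff_dvd_coeff] at hk
      have hkS : k ∣ (S:ℤ) := by
        have := hk d
        simpa [coeff_X_pow, hd0.ne', (show d ≠ 0 from hd0.ne')] using this
      have hkR : k ∣ (R:ℤ) := by
        have := hk 0
        have h0 : ((C ((S:ℤ))) * X ^ d - C (R:ℤ)).coeff 0 = -(R:ℤ) := by
          simp only [coeff_sub, coeff_C_mul, coeff_X_pow, coeff_C, if_neg hd0.ne']
          simp [(show ¬ (0 = d) from fun h => hd0.ne' h.symm)]
        rw [h0] at this
        exact (dvd_neg.mp this)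
      exact hcop.isUnit_of_dvd' hkR hkS
    rw [Polynomial.IsPrimitive.Int.irreducible_iff_irreducible_map_cast hprim]
    have hmap : ((C (S:ℤ)) * X ^ d - C (R:ℤ)).map (Int.castRingHom ℚ) =
        C (S:ℚ) * (X ^ d - C c) := by
      rw [Polynomial.map_sub, Polynomial.map_mul, Polynomial.map_pow, map_X, map_C, map_C,
        mul_sub, ← map_mul, hSc]
      norm_num
    rw [hmap]
    have hu : IsUnit (C (S:ℚ)) := isUnit_C.mpr (isUnit_iff_ne_zero.mpr hSne)
    have hassoc : Associated (X ^ d - C c : ℚ[X]) (C (S:ℚ) * (X ^ d - C c)) := by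
      rw [mul_comm]
      exact ⟨hu.unit, by simp⟩
    exact hassoc.irreducible hirr
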